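/- The unordered configuration space D₂(S²), i.e. the quotient of F₂(S²) = {(x,y) ∈ S² × S² | x ≠ y} by the coordinate-swap involution (x,y) ↦ (y,x), is homotopy equivalent to the real projective plane RP²; indeed the map RP² → D₂(S²) induced on quotients by x ↦ (x,−x) is a homotopy equivalence. -/

import Mathlib

noncomputable section

open Metric

abbrev E3 := EuclideanSpace ℝ (Fin 3)
abbrev S2 := Metric.sphere (0 : E3) 1

/-- Ordered configuration space. -/
def Conf (n : ℕ) (Y : Type*) [TopologicalSpace Y] : Type _ :=
  {y : Fin n → Y // Function.Injective y}

instance (n : ℕ) (Y : Type*) [TopologicalSpace Y] : TopologicalSpace (Conf n Y) :=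
  instTopologicalSpaceSubtype

/-- The setoid on `Conf n Y` given by the permutation action. -/
def permSetoid (n : ℕ) (Y : Type*) [TopologicalSpace Y] : Setoid (Conf n Y) where
  r a b := ∃ σ : Equiv.Perm (Fin n), b.1 = a.1 ∘ σ
  iseqv := by
    constructor
    · exact fun a => ⟨1, by ext i; simp⟩
    · rintro a b ⟨σ, h⟩
      exact ⟨σ⁻¹, by ext i; simp [h]⟩
    · rintro a b c ⟨σ, h⟩ ⟨τ, h'⟩
      exact ⟨σ * τ, by ext i; simp [h', h]⟩

/-- Unordered configuration space. -/
def UConf (n : ℕ) (Y : Type*) [TopologicalSpace Y] : Type _ :=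
  Quotient (permSetoid n Y)

instance (n : ℕ) (Y : Type*) [TopologicalSpace Y] : TopologicalSpace (UConf n Y) :=
  instTopologicalSpaceQuotient

lemma S2.ne_neg (x : S2) : (x : E3) ≠ -(x : E3) := by
  intro h
  have hx : (x : E3) = 0 := by
    have h2 : (x : E3) + (x : E3) = 0 := by
      nth_rewrite 2 [h]; simp
    have h3 : (2 : ℝ) • (x : E3) = 0 := by rw [two_smul]; exact h2
    have := smul_eq_zero.mp h3
    simpa using this
  have := x.2
  rw [mem_sphere_zero_iff_norm] at this
  rw [hx] at this
  simp at this

/-- The antipodal setoid on the sphere. -/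
def antipodalSetoid : Setoid S2 where
  r x y := (x : E3) = y ∨ (x : E3) = -y
  iseqv := by
    constructor
    · exact fun x => Or.inl rfl
    · rintro x y (h | h)
      · exact Or.inl h.symm
      · exact Or.inr (by rw [h]; simp)
    · rintro x y z (h | h) (h' | h')
      · exact Or.inl (h.trans h')
      · exact Or.inr (by rw [h, h'])
      · exact Or.inr (by rw [h, h'])
      · exact Or.inl (by rw [h, h']; simp)

/-- The real projective plane, as the quotient of the sphere by the antipodal map. -/
def RP2 : Type _ := Quotient antipodalSetoid

instance : TopologicalSpace RP2 := instTopologicalSpaceQuotient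

/-- The canonical projection from the sphere to the projective plane. -/
def pS2 : S2 → RP2 := Quotient.mk antipodalSetoid

lemma pS2.continuous : Continuous pS2 := continuous_quotient_mk'

/-- The underlying vector of the map `U_P`. -/
def Uvec (P x : E3) : E3 := (2 * inner ℝ P x : ℝ) • x - P

lemma Uvec.norm_eq (P x : E3) (hP : ‖P‖ = 1) (hx : ‖x‖ = 1) : ‖Uvec P x‖ = 1 := by
  have h1 : ‖Uvec P x‖ ^ 2 = 1 := by
    rw [Uvec, norm_sub_sq_real, norm_smul, real_inner_smul_left, real_inner_comm x P, hx, hP,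
      Real.norm_eq_abs, mul_one, one_pow, sq_abs]
    ring
  nlinarith [norm_nonneg (Uvec P x)]

lemma Uvec.neg (P x : E3) : Uvec P (-x) = Uvec P x := by
  simp [Uvec, inner_neg_right]

/-- The map `U_P` on the sphere. -/
def USph (P x : S2) : S2 :=
  ⟨Uvec P.1 x.1, by
    rw [mem_sphere_zero_iff_norm]
    exact Uvec.norm_eq _ _ (by simp [← mem_sphere_zero_iff_norm, P.2])
      (by simp [← mem_sphere_zero_iff_norm, x.2])⟩

lemma USph.continuous (P : S2) : Continuous (USph P) := by
  apply Continuous.subtype_mk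
  apply Continuous.sub
  · exact (continuous_const.mul (Continuous.inner (𝕜 := ℝ) (E := E3) continuous_const continuous_subtype_val)).smul
      continuous_subtype_val
  · exact continuous_const

/-- The map `W_P` on the projective plane. -/
def WP (P : S2) : RP2 → RP2 :=
  Quotient.lift (fun x => pS2 (USph P x)) (by
    rintro a b (h | h)
    · have hab : a = b := Subtype.ext h
      show pS2 (USph P a) = pS2 (USph P b)
      rw [hab]
    · have hab : USph P a = USph P b :=
        Subtype.ext (show Uvec P.1 a.1 = Uvec P.1 b.1 by rw [h, Uvec.neg])
      show pS2 (USph P a) = pS2 (USph P b)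
      rw [hab])

lemma WP.continuous (P : S2) : Continuous (WP P) :=
  Continuous.quotient_lift (pS2.continuous.comp (USph.continuous P)) _

/-- `W_P` as a continuous map. -/
def WPc (P : S2) : C(RP2, RP2) := ⟨WP P, WP.continuous P⟩

lemma WPc_apply (P : S2) (x : S2) : WPc P (pS2 x) = pS2 (USph P x) := rfl

lemma S2.ne_neg' (x : S2) : x ≠ -x := fun h => S2.ne_neg x (congrArg Subtype.val h)

/-- The map `x ↦ (x, -x)` into the ordered configuration space `F₂(S²)`. -/
def pairMap (x : S2) : Conf 2 S2 :=
  ⟨![x, -x], by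
    intro i j hij
    fin_cases i <;> fin_cases j <;> simp_all
    · exact S2.ne_neg' x hij
    · exact S2.ne_neg' x hij.symm⟩

/-! ### Auxiliary material for `stmt2` -/

section Stmt2Aux

open RealInnerProductSpace

def uvec (x y : E3) : E3 := ‖x - y‖⁻¹ • (x - y)
def avec (t : ℝ) (x y : E3) : E3 := (1 - t) • x + t • uvec x y
def nvec (t : ℝ) (x y : E3) : E3 := ‖avec t x y‖⁻¹ • avec t x y

variable {x y : E3} {t : ℝ}

lemma sub_norm_pos (hxy : x ≠ y) : 0 < ‖x - y‖ := by
  simpa [sub_eq_zero] using hxy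

lemma uvec_norm (hxy : x ≠ y) : ‖uvec x y‖ = 1 := by
  rw [uvec, norm_smul, norm_inv, norm_norm, inv_mul_cancel₀ (sub_norm_pos hxy).ne']

lemma uvec_swap (x y : E3) : uvec y x = -uvec x y := by
  rw [uvec, uvec, norm_sub_rev, ← smul_neg, neg_sub]

lemma inner_x_uvec_pos (hx : ‖x‖ = 1) (hy : ‖y‖ = 1) (hxy : x ≠ y) :
    0 < ⟪x, uvec x y⟫ := by
  have h1 : ⟪x, x - y⟫ = 1 - ⟪x, y⟫ := by
    rw [inner_sub_right, real_inner_self_eq_norm_sq, hx]; ring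
  have h2 : ‖x - y‖ ^ 2 = 2 - 2 * ⟪x, y⟫ := by
    rw [norm_sub_sq_real, hx, hy]; ring
  have h3 : 0 < ‖x - y‖ := sub_norm_pos hxy
  have h4 : 0 < 1 - ⟪x, y⟫ := by nlinarith
  rw [uvec, real_inner_smul_right, h1]
  positivity

lemma inner_avec_uvec (hxy : x ≠ y) :
    ⟪avec t x y, uvec x y⟫ = (1 - t) * ⟪x, uvec x y⟫ + t := by
  rw [avec, inner_add_left, real_inner_smul_left, real_inner_smul_left,
    real_inner_self_eq_norm_sq, uvec_norm hxy]
  ring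

lemma inner_avec_pos (hx : ‖x‖ = 1) (hy : ‖y‖ = 1) (hxy : x ≠ y)
    (ht0 : 0 ≤ t) (ht1 : t ≤ 1) : 0 < ⟪avec t x y, uvec x y⟫ := by
  rw [inner_avec_uvec hxy]
  have := inner_x_uvec_pos hx hy hxy
  rcases eq_or_lt_of_le ht0 with h | h
  · nlinarith
  · nlinarith

lemma avec_ne_zero (hx : ‖x‖ = 1) (hy : ‖y‖ = 1) (hxy : x ≠ y)
    (ht0 : 0 ≤ t) (ht1 : t ≤ 1) : avec t x y ≠ 0 := by
  intro h
  have := inner_avec_pos hx hy hxy ht0 ht1 (t := t)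
  rw [h, inner_zero_left] at this
  exact lt_irrefl _ this

lemma nvec_norm (hx : ‖x‖ = 1) (hy : ‖y‖ = 1) (hxy : x ≠ y)
    (ht0 : 0 ≤ t) (ht1 : t ≤ 1) : ‖nvec t x y‖ = 1 := by
  have h := avec_ne_zero hx hy hxy ht0 ht1 (t := t)
  rw [nvec, norm_smul, norm_inv, norm_norm, inv_mul_cancel₀ (norm_ne_zero_iff.mpr h)]

lemma inner_nvec_pos (hx : ‖x‖ = 1) (hy : ‖y‖ = 1) (hxy : x ≠ y)
    (ht0 : 0 ≤ t) (ht1 : t ≤ 1) : 0 < ⟪nvec t x y, uvec x y⟫ := by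
  have h := avec_ne_zero hx hy hxy ht0 ht1 (t := t)
  rw [nvec, real_inner_smul_left]
  have hn : 0 < ‖avec t x y‖ := norm_pos_iff.mpr h
  exact mul_pos (by positivity) (inner_avec_pos hx hy hxy ht0 ht1)

lemma nvec_ne (hx : ‖x‖ = 1) (hy : ‖y‖ = 1) (hxy : x ≠ y)
    (ht0 : 0 ≤ t) (ht1 : t ≤ 1) : nvec t x y ≠ nvec t y x := by
  intro h
  have h1 := inner_nvec_pos hx hy hxy ht0 ht1 (t := t)
  have h2 := inner_nvec_pos hy hx hxy.symm ht0 ht1 (t := t)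
  rw [uvec_swap, inner_neg_right, ← h] at h2
  linarith

lemma nvec_zero (hx : ‖x‖ = 1) : nvec 0 x y = x := by
  have ha : avec 0 x y = x := by simp [avec]
  rw [nvec, ha, hx, inv_one, one_smul]

lemma nvec_one (hxy : x ≠ y) : nvec 1 x y = uvec x y := by
  have ha : avec 1 x y = uvec x y := by simp [avec]
  rw [nvec, ha, uvec_norm hxy, inv_one, one_smul]

end Stmt2Aux

/-! ### The sphere / configuration-space level -/

lemma S2.norm_one (x : S2) : ‖(x : E3)‖ = 1 := mem_sphere_zero_iff_norm.mp x.2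

/-- The quotient map onto the unordered configuration space. -/
def q2 : Conf 2 S2 → UConf 2 S2 := Quotient.mk (permSetoid 2 S2)

lemma q2_continuous : Continuous q2 := continuous_quotient_mk'

lemma perm_two (σ : Equiv.Perm (Fin 2)) : σ = 1 ∨ σ = Equiv.swap 0 1 := by
  revert σ; decide

/-- The action of a permutation on the ordered configuration space. -/
def act (σ : Equiv.Perm (Fin 2)) (c : Conf 2 S2) : Conf 2 S2 :=
  ⟨c.1 ∘ σ, c.2.comp σ.injective⟩

lemma act_continuous (σ : Equiv.Perm (Fin 2)) : Continuous (act σ) := by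
  apply Continuous.subtype_mk
  apply continuous_pi
  intro i
  exact (continuous_apply (σ i)).comp continuous_subtype_val

lemma q2_qm : Topology.IsQuotientMap q2 := isQuotientMap_quot_mk

lemma q2_isOpenMap : IsOpenMap q2 := by
  intro U hU
  rw [← q2_qm.isOpen_preimage]
  have hset : q2 ⁻¹' (q2 '' U) = ⋃ σ, act σ ⁻¹' U := by
    ext c
    simp only [Set.mem_preimage, Set.mem_image, Set.mem_iUnion]
    constructor
    · rintro ⟨d, hd, hdc⟩
      obtain ⟨σ, hσ⟩ := Quotient.exact (hdc : q2 d = q2 c)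
      refine ⟨σ⁻¹, ?_⟩
      have : act σ⁻¹ c = d := by
        apply Subtype.ext
        funext i
        show c.1 (σ⁻¹ i) = d.1 i
        rw [hσ]
        simp
      exact Set.mem_preimage.mpr (this ▸ hd)
    · rintro ⟨σ, hσ⟩
      refine ⟨act σ c, hσ, ?_⟩
      exact Quotient.sound ⟨σ⁻¹, by funext i; show c.1 i = c.1 (σ (σ⁻¹ i)); simp⟩
  rw [hset]
  exact isOpen_iUnion fun σ => hU.preimage (act_continuous σ)

lemma q2_isOpenQuotientMap : IsOpenQuotientMap q2 :=
  ⟨fun z => Quot.exists_rep z, q2_continuous, q2_isOpenMap⟩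

/-- First point of a configuration, as a vector. -/
def cx (c : Conf 2 S2) : E3 := (c.1 0 : E3)
/-- Second point of a configuration, as a vector. -/
def cy (c : Conf 2 S2) : E3 := (c.1 1 : E3)

lemma conf_ne (c : Conf 2 S2) : cx c ≠ cy c := fun h =>
  absurd (c.2 (Subtype.ext h)) (by decide)

lemma cx_norm (c : Conf 2 S2) : ‖cx c‖ = 1 := S2.norm_one _
lemma cy_norm (c : Conf 2 S2) : ‖cy c‖ = 1 := S2.norm_one _

lemma cx_continuous : Continuous cx :=
  continuous_subtype_val.comp ((continuous_apply 0).comp continuous_subtype_val)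
lemma cy_continuous : Continuous cy :=
  continuous_subtype_val.comp ((continuous_apply 1).comp continuous_subtype_val)

/-- The unit vector pointing from the second point to the first, as a sphere point. -/
def usph (c : Conf 2 S2) : S2 :=
  ⟨uvec (cx c) (cy c), by rw [mem_sphere_zero_iff_norm]; exact uvec_norm (conf_ne c)⟩

/-- the map `D₂(S²) → RP²` on the ordered level. -/
def gConf (c : Conf 2 S2) : RP2 := pS2 (usph c)

lemma act_swap_cx (c : Conf 2 S2) : cx (act (Equiv.swap 0 1) c) = cy c := by
  show ((c.1 ∘ (Equiv.swap 0 1)) 0 : E3) = _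
  simp [cy]
lemma act_swap_cy (c : Conf 2 S2) : cy (act (Equiv.swap 0 1) c) = cx c := by
  show ((c.1 ∘ (Equiv.swap 0 1)) 1 : E3) = _
  simp [cx]

lemma gConf_act (σ : Equiv.Perm (Fin 2)) (c : Conf 2 S2) : gConf (act σ c) = gConf c := by
  rcases perm_two σ with h | h
  · subst h
    have h1 : act 1 c = c := Subtype.ext (funext fun i => rfl)
    rw [h1]
  · subst h
    apply Quotient.sound
    refine Or.inr ?_
    show uvec (cx (act _ c)) (cy (act _ c)) = -uvec (cx c) (cy c)
    rw [act_swap_cx, act_swap_cy, uvec_swap]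

lemma gConf_rel {a b : Conf 2 S2} (h : (permSetoid 2 S2).r a b) : gConf a = gConf b := by
  obtain ⟨σ, hσ⟩ := h
  have : b = act σ a := Subtype.ext hσ
  rw [this, gConf_act]

lemma gConf_continuous : Continuous gConf := by
  apply pS2.continuous.comp
  apply Continuous.subtype_mk
  have hsub : Continuous fun c : Conf 2 S2 => cx c - cy c := cx_continuous.sub cy_continuous
  have hne : ∀ c : Conf 2 S2, ‖cx c - cy c‖ ≠ 0 := fun c =>
    norm_ne_zero_iff.mpr (sub_ne_zero.mpr (conf_ne c))
  exact ((hsub.norm.inv₀ hne).smul hsub : _)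

/-- The continuous map `D₂(S²) → RP²`. -/
def gMap : C(UConf 2 S2, RP2) :=
  ⟨Quotient.lift gConf fun _ _ h => gConf_rel h, gConf_continuous.quotient_lift _⟩

/-- The map `RP² → D₂(S²)` on the ordered level. -/
def fAux (x : S2) : UConf 2 S2 := q2 (pairMap x)

lemma pairMap_continuous : Continuous pairMap := by
  apply Continuous.subtype_mk
  apply continuous_pi
  intro i
  fin_cases i
  · exact continuous_id
  · exact continuous_neg

lemma fAux_rel {a b : S2} (h : antipodalSetoid.r a b) : fAux a = fAux b := by
  rcases h with h | h
  · rw [show a = b from Subtype.ext h]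
  · have hab : a = -b := Subtype.ext (by rw [h, coe_neg_sphere])
    subst hab
    apply Quotient.sound
    refine ⟨Equiv.swap 0 1, ?_⟩
    funext i
    fin_cases i
    · show b = ((![-b, -(-b)] : Fin 2 → S2) ∘ (Equiv.swap 0 1)) 0
      simp
    · show -b = ((![-b, -(-b)] : Fin 2 → S2) ∘ (Equiv.swap 0 1)) 1
      simp

/-- The continuous map `RP² → D₂(S²)`. -/
def fMap : C(RP2, UConf 2 S2) :=
  ⟨Quotient.lift fAux fun _ _ h => fAux_rel h,
    (q2_continuous.comp pairMap_continuous).quotient_lift _⟩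

lemma uvec_self_neg (x : S2) : uvec (x : E3) (-(x : E3)) = (x : E3) := by
  have h1 : (x : E3) - (-(x : E3)) = (2 : ℝ) • (x : E3) := by
    rw [sub_neg_eq_add, two_smul]
  rw [uvec, h1, norm_smul, S2.norm_one, smul_smul]
  norm_num

lemma gMap_fMap (z : RP2) : gMap (fMap z) = z := by
  induction z using Quotient.ind with
  | _ x =>
    show gConf (pairMap x) = pS2 x
    unfold gConf
    congr 1
    apply Subtype.ext
    show uvec (cx (pairMap x)) (cy (pairMap x)) = (x : E3)
    have hx : cx (pairMap x) = (x : E3) := rfl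
    have hy : cy (pairMap x) = -(x : E3) := by
      show ((![x, -x] : Fin 2 → S2) 1 : E3) = _
      simp [coe_neg_sphere]
    rw [hx, hy, uvec_self_neg]

/-! ### The homotopy -/

/-- domain of the homotopy at the ordered level -/
abbrev HD := unitInterval × Conf 2 S2

def Ksph1 (p : HD) : S2 :=
  ⟨nvec (p.1 : ℝ) (cx p.2) (cy p.2), by
    rw [mem_sphere_zero_iff_norm]
    exact nvec_norm (cx_norm _) (cy_norm _) (conf_ne _) p.1.2.1 p.1.2.2⟩

def Ksph2 (p : HD) : S2 :=
  ⟨nvec (p.1 : ℝ) (cy p.2) (cx p.2), by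
    rw [mem_sphere_zero_iff_norm]
    exact nvec_norm (cy_norm _) (cx_norm _) (conf_ne _).symm p.1.2.1 p.1.2.2⟩

lemma Ksph_ne (p : HD) : Ksph1 p ≠ Ksph2 p := fun h =>
  nvec_ne (cx_norm _) (cy_norm _) (conf_ne _) p.1.2.1 p.1.2.2 (congrArg Subtype.val h)

/-- The homotopy at the ordered level. -/
def Kmap (p : HD) : Conf 2 S2 :=
  ⟨![Ksph1 p, Ksph2 p], by
    intro i j hij
    fin_cases i <;> fin_cases j <;> simp_all
    · exact Ksph_ne p hij
    · exact Ksph_ne p hij.symm⟩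

lemma nvec_continuous_aux {X : Type*} [TopologicalSpace X] {a b : X → E3} {τ : X → ℝ}
    (ha : Continuous a) (hb : Continuous b) (hτ : Continuous τ)
    (hne : ∀ p, a p ≠ b p) (hav : ∀ p, avec (τ p) (a p) (b p) ≠ 0) :
    Continuous fun p => nvec (τ p) (a p) (b p) := by
  have hsub : Continuous fun p => a p - b p := ha.sub hb
  have hne' : ∀ p, ‖a p - b p‖ ≠ 0 := fun p => norm_ne_zero_iff.mpr (sub_ne_zero.mpr (hne p))
  have hu : Continuous fun p => uvec (a p) (b p) := by
    unfold uvec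
    exact (hsub.norm.inv₀ hne').smul hsub
  have hav' : Continuous fun p => avec (τ p) (a p) (b p) := by
    unfold avec
    exact ((continuous_const.sub hτ).smul ha).add (hτ.smul hu)
  have hav'' : ∀ p, ‖avec (τ p) (a p) (b p)‖ ≠ 0 := fun p => norm_ne_zero_iff.mpr (hav p)
  unfold nvec
  exact (hav'.norm.inv₀ hav'').smul hav'

lemma Kmap_continuous : Continuous Kmap := by
  have ht : Continuous fun p : HD => (p.1 : ℝ) := continuous_subtype_val.comp continuous_fst
  have hcx : Continuous fun p : HD => cx p.2 := cx_continuous.comp continuous_snd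
  have hcy : Continuous fun p : HD => cy p.2 := cy_continuous.comp continuous_snd
  have hne : ∀ p : HD, cx p.2 ≠ cy p.2 := fun p => conf_ne p.2
  have h1 : Continuous Ksph1 := by
    apply Continuous.subtype_mk
    exact nvec_continuous_aux hcx hcy ht hne fun p =>
      avec_ne_zero (cx_norm _) (cy_norm _) (conf_ne _) p.1.2.1 p.1.2.2
  have h2 : Continuous Ksph2 := by
    apply Continuous.subtype_mk
    exact nvec_continuous_aux hcy hcx ht (fun p => (hne p).symm) fun p =>
      avec_ne_zero (cy_norm _) (cx_norm _) (conf_ne _).symm p.1.2.1 p.1.2.2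
  apply Continuous.subtype_mk
  apply continuous_pi
  intro i
  fin_cases i
  · exact h1
  · exact h2

lemma Kmap_act (t : unitInterval) (σ : Equiv.Perm (Fin 2)) (c : Conf 2 S2) :
    q2 (Kmap (t, act σ c)) = q2 (Kmap (t, c)) := by
  rcases perm_two σ with h | h
  · subst h
    have h1 : act 1 c = c := Subtype.ext (funext fun i => rfl)
    rw [h1]
  · subst h
    apply Quotient.sound
    refine ⟨Equiv.swap 0 1, ?_⟩
    have e1 : Ksph1 (t, act (Equiv.swap 0 1) c) = Ksph2 (t, c) := by
      apply Subtype.ext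
      show nvec (t : ℝ) (cx (act (Equiv.swap 0 1) c)) (cy (act (Equiv.swap 0 1) c)) =
        nvec (t : ℝ) (cy c) (cx c)
      rw [act_swap_cx, act_swap_cy]
    have e2 : Ksph2 (t, act (Equiv.swap 0 1) c) = Ksph1 (t, c) := by
      apply Subtype.ext
      show nvec (t : ℝ) (cy (act (Equiv.swap 0 1) c)) (cx (act (Equiv.swap 0 1) c)) =
        nvec (t : ℝ) (cx c) (cy c)
      rw [act_swap_cx, act_swap_cy]
    funext i
    fin_cases i <;> simp [Kmap, e1, e2]

/-- The homotopy descended to the unordered configuration space. -/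
def Phi (p : unitInterval × UConf 2 S2) : UConf 2 S2 :=
  Quotient.lift (fun c => q2 (Kmap (p.1, c)))
    (fun a b h => by
      obtain ⟨σ, hσ⟩ := h
      have hb : b = act σ a := Subtype.ext hσ
      show q2 (Kmap (p.1, a)) = q2 (Kmap (p.1, b))
      rw [hb]
      exact (Kmap_act p.1 σ a).symm) p.2

lemma Phi_continuous : Continuous Phi := by
  have qm : Topology.IsQuotientMap (Prod.map (id : unitInterval → unitInterval) q2) :=
    (IsOpenQuotientMap.id.prodMap q2_isOpenQuotientMap).isQuotientMap
  rw [qm.continuous_iff]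
  exact q2_continuous.comp Kmap_continuous

lemma Phi_zero (c : Conf 2 S2) : Phi (0, q2 c) = q2 c := by
  show q2 (Kmap (0, c)) = q2 c
  congr 1
  apply Subtype.ext
  funext i
  fin_cases i
  · show Ksph1 (0, c) = c.1 0
    exact Subtype.ext (nvec_zero (cx_norm c))
  · show Ksph2 (0, c) = c.1 1
    exact Subtype.ext (nvec_zero (cy_norm c))

lemma Phi_one (c : Conf 2 S2) : Phi (1, q2 c) = fMap (gMap (q2 c)) := by
  show q2 (Kmap (1, c)) = q2 (pairMap (usph c))
  congr 1
  apply Subtype.ext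
  funext i
  fin_cases i
  · show Ksph1 (1, c) = usph c
    exact Subtype.ext (nvec_one (conf_ne c))
  · show Ksph2 (1, c) = -usph c
    refine Subtype.ext ?_
    show nvec 1 (cy c) (cx c) = ((-usph c : S2) : E3)
    rw [coe_neg_sphere, nvec_one (conf_ne c).symm]
    show uvec (cy c) (cx c) = -uvec (cx c) (cy c)
    exact uvec_swap _ _

/-- The continuous map underlying the homotopy. -/
def Hcm : C(unitInterval × UConf 2 S2, UConf 2 S2) :=
  ⟨fun p => Phi (unitInterval.symm p.1, p.2),
    Phi_continuous.comp ((unitInterval.continuous_symm.comp continuous_fst).prodMk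
      continuous_snd)⟩

/-- The map `RP² → D₂(S²)` induced on quotients by `x ↦ (x, -x)` is a homotopy
equivalence; in particular `D₂(S²)` is homotopy equivalent to `RP²`. -/
theorem stmt2 :
    ∃ e : ContinuousMap.HomotopyEquiv RP2 (UConf 2 S2),
      ∀ x : S2, e.toFun (pS2 x) = Quotient.mk (permSetoid 2 S2) (pairMap x) := by
  have hleft : (gMap.comp fMap).Homotopic (ContinuousMap.id RP2) := by
    have h : gMap.comp fMap = ContinuousMap.id RP2 := ContinuousMap.ext gMap_fMap
    rw [h]
  have hright : (fMap.comp gMap).Homotopic (ContinuousMap.id (UConf 2 S2)) := by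
    refine ⟨{ toContinuousMap := Hcm, map_zero_left := ?_, map_one_left := ?_ }⟩
    · intro z
      induction z using Quotient.ind with
      | _ c =>
        show Phi (unitInterval.symm 0, q2 c) = (fMap.comp gMap) (q2 c)
        rw [unitInterval.symm_zero]
        exact Phi_one c
    · intro z
      induction z using Quotient.ind with
      | _ c =>
        show Phi (unitInterval.symm 1, q2 c) = q2 c
        rw [unitInterval.symm_one]
        exact Phi_zero c
  exact ⟨⟨fMap, gMap, hleft, hright⟩, fun x => rfl⟩
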